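/- arXiv:2506.04657 — 3 statements merged into one kernel-verified Lean document; each statement's English description precedes it below -/
import Mathlib

section
/- Let k ≥ 2. A position S = (x_1, ..., x_n) is a P-position in misère k-Bounded Greedy Nim if and only if one of the following holds: (i) x_3 ≤ 1, β(S) is even, and (x_1, x_2) is k-nice; (ii) x_3 ≤ 1, β(S) is odd, and R(x_1 − x_2) = 0; (iii) x_3 ≥ 2, β(S) is even, and R(x_1 − x_2) = 0; (iv) x_3 ≥ 2, β(S) is odd, and (x_1, x_2, x_3) is k-good. -/
/-- One move in `k`-bounded greedy Nim on a descending-sorted list of heaps: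
remove `t` stones with `1 ≤ t ≤ min x₁ k` from a heap with the largest
number of stones `x₁` (the head), and re-sort the result in descending order. -/
def BFollower (k : ℕ) (S S' : List ℕ) : Prop :=
  ∃ t : ℕ, 1 ≤ t ∧ t ≤ min S.headI k ∧
    S' = List.orderedInsert (· ≥ ·) (S.headI - t) S.tail

/-- One move in greedy Nim: remove any `t` stones with `1 ≤ t ≤ x₁` from a heap
with the largest number of stones `x₁`, and re-sort in descending order. -/
def GFollower (S S' : List ℕ) : Prop :=
  ∃ t : ℕ, 1 ≤ t ∧ t ≤ S.headI ∧
    S' = List.orderedInsert (· ≥ ·) (S.headI - t) S.tail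

theorem BFollower.sum_lt {k : ℕ} {S S' : List ℕ} (h : BFollower k S S') :
    S'.sum < S.sum := by
  obtain ⟨t, ht1, ht2, rfl⟩ := h
  have htx : t ≤ S.headI := le_trans ht2 (min_le_left _ _)
  match S with
  | [] => simp [List.headI] at htx; omega
  | a :: l =>
      have hperm := List.perm_orderedInsert (· ≥ ·) (a - t) l
      have hsum : (List.orderedInsert (· ≥ ·) (a - t) l).sum = (a - t) + l.sum :=
        hperm.sum_eq
      simp only [List.headI, List.tail] at *
      simp [hsum]
      omega

theorem GFollower.sum_lt {S S' : List ℕ} (h : GFollower S S') :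
    S'.sum < S.sum := by
  obtain ⟨t, ht1, ht2, rfl⟩ := h
  match S with
  | [] => simp [List.headI] at ht2; omega
  | a :: l =>
      have hperm := List.perm_orderedInsert (· ≥ ·) (a - t) l
      have hsum : (List.orderedInsert (· ≥ ·) (a - t) l).sum = (a - t) + l.sum :=
        hperm.sum_eq
      simp only [List.headI, List.tail] at *
      simp [hsum]
      omega

/-- `S` is a P-position of `k`-bounded greedy Nim under the normal play
convention: the all-zero position is a P-position (it has no followers), and a
position is a P-position iff every follower is an N-position. -/
def NormalBP (k : ℕ) (S : List ℕ) : Prop :=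
  ∀ S', BFollower k S S' → ¬ NormalBP k S'
termination_by S.sum
decreasing_by exact BFollower.sum_lt (by assumption)

/-- `S` is a P-position of `k`-bounded greedy Nim under the misère play
convention: the all-zero position is an N-position, and any other position is a
P-position iff every follower is an N-position. -/
def MisereBP (k : ℕ) (S : List ℕ) : Prop :=
  S.sum ≠ 0 ∧ ∀ S', BFollower k S S' → ¬ MisereBP k S'
termination_by S.sum
decreasing_by exact BFollower.sum_lt (by assumption)

/-- Normal-play P-positions of greedy Nim. -/
def NormalGP (S : List ℕ) : Prop :=
  ∀ S', GFollower S S' → ¬ NormalGP S'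
termination_by S.sum
decreasing_by exact GFollower.sum_lt (by assumption)

/-- Misère-play P-positions of greedy Nim. -/
def MisereGP (S : List ℕ) : Prop :=
  S.sum ≠ 0 ∧ ∀ S', GFollower S S' → ¬ MisereGP S'
termination_by S.sum
decreasing_by exact GFollower.sum_lt (by assumption)

/-- `R a` is the remainder of `a` modulo `k + 1`. -/
def R (k a : ℕ) : ℕ := a % (k + 1)

/-- The `j`-th heap (1-based) of the position `S`. -/
def heap (S : List ℕ) (j : ℕ) : ℕ := S.getD (j - 1) 0

/-- `β(S)`: `0` if `x₃ = 0`, and `max { j : x_j = x₃ } - 2` otherwise. -/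
noncomputable def beta (S : List ℕ) : ℕ :=
  if heap S 3 = 0 then 0
  else sSup {j : ℕ | 1 ≤ j ∧ j ≤ S.length ∧ heap S j = heap S 3} - 2

/-- `α(S)`: `0` if `x₁ = 0`, and `max { j : x_j = x₁ }` otherwise. -/
noncomputable def alpha (S : List ℕ) : ℕ :=
  if heap S 1 = 0 then 0
  else sSup {j : ℕ | 1 ≤ j ∧ j ≤ S.length ∧ heap S j = heap S 1}

/-- The pair `(x₁, x₂)` (with `x₁ ≥ x₂`) is `k`-nice. -/
def KNice (k x₁ x₂ : ℕ) : Prop :=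
  (R k x₁ = 0 ∧ R k x₂ = 1) ∨
  (R k (x₁ - x₂) = 0 ∧ 2 ≤ R k x₂) ∨
  (R k x₁ = 1 ∧ R k x₂ = 0)

/-- The triple `(x₁, x₂, x₃)` (with `x₁ ≥ x₂ ≥ x₃`) is `k`-good. -/
def KGood (k x₁ x₂ x₃ : ℕ) : Prop :=
  (R k (x₁ - x₂) = k ∧ R k (x₂ - x₃) = 0) ∨
  (R k (x₁ - x₂) = 0 ∧ 1 ≤ R k (x₂ - x₃) ∧ R k (x₂ - x₃) ≤ k - 1) ∨
  (R k (x₁ - x₂) = 1 ∧ R k (x₂ - x₃) = k)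


/-- The condition of the main theorem characterizing misère P-positions of
`k`-bounded greedy Nim. -/
noncomputable def MiserePCond (k : ℕ) (S : List ℕ) : Prop :=
  (heap S 3 ≤ 1 ∧ Even (beta S) ∧ KNice k (heap S 1) (heap S 2)) ∨
  (heap S 3 ≤ 1 ∧ Odd (beta S) ∧ R k (heap S 1 - heap S 2) = 0) ∨
  (2 ≤ heap S 3 ∧ Even (beta S) ∧ R k (heap S 1 - heap S 2) = 0) ∨
  (2 ≤ heap S 3 ∧ Odd (beta S) ∧ KGood k (heap S 1) (heap S 2) (heap S 3))


set_option maxHeartbeats 1000000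

lemma R_lt (k a : ℕ) : R k a < k + 1 := Nat.mod_lt _ (Nat.succ_pos k)
lemma R_small {k a : ℕ} (h : a < k + 1) : R k a = a := Nat.mod_eq_of_lt h
lemma R_le (k a : ℕ) : R k a ≤ a := Nat.mod_le a (k+1)

lemma R_sub_char (k : ℕ) {a b : ℕ} (h : b ≤ a) :
    (R k b ≤ R k a ∧ R k (a-b) = R k a - R k b) ∨
    (R k a < R k b ∧ R k (a-b) = R k a + (k+1) - R k b) := by
  set r := k + 1 with hr
  have ha : r * (a / r) + R k a = a := Nat.div_add_mod a r
  have hb : r * (b / r) + R k b = b := Nat.div_add_mod b r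
  have hRa : R k a < r := R_lt k a
  have hRb : R k b < r := R_lt k b
  have hq : b / r ≤ a / r := Nat.div_le_div_right h
  set qa := a / r; set qb := b / r
  rcases le_or_gt (R k b) (R k a) with hc | hc
  · left
    refine ⟨hc, ?_⟩
    have e1 : qa = qb + (qa - qb) := by omega
    have hm : r * qa = r * qb + r * (qa - qb) := by conv_lhs => rw [e1]; rw [Nat.mul_add]
    have hab : a - b = r * (qa - qb) + (R k a - R k b) := by omega
    rw [hab]
    show (r * (qa - qb) + (R k a - R k b)) % r = _
    rw [Nat.mul_add_mod]
    exact Nat.mod_eq_of_lt (by omega)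
  · right
    refine ⟨hc, ?_⟩
    have hne : qa ≠ qb := by intro h'; rw [h'] at ha; omega
    have e1 : qa = qb + ((qa - qb - 1) + 1) := by omega
    have hm : r * qa = r * qb + (r * (qa - qb - 1) + r) := by
      conv_lhs => rw [e1]; rw [Nat.mul_add]
      rw [Nat.mul_add, Nat.mul_one]
    have hab : a - b = r * (qa - qb - 1) + (R k a + r - R k b) := by omega
    rw [hab]
    show (r * (qa - qb - 1) + (R k a + r - R k b)) % r = _
    rw [Nat.mul_add_mod]
    exact Nat.mod_eq_of_lt (by omega)

def CondT (k y1 y2 y3 b : ℕ) : Prop :=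
  (y3 ≤ 1 ∧ Even b ∧ KNice k y1 y2) ∨
  (y3 ≤ 1 ∧ Odd b ∧ R k (y1 - y2) = 0) ∨
  (2 ≤ y3 ∧ Even b ∧ R k (y1 - y2) = 0) ∨
  (2 ≤ y3 ∧ Odd b ∧ KGood k y1 y2 y3)

def bet (x3 x4 c : ℕ) : ℕ := if x3 = 0 then 0 else if x4 < x3 then 1 else c - 2

def FT (k x1 x2 x3 x4 c t : ℕ) : Prop :=
  if x2 ≤ x1 - t then CondT k (x1 - t) x2 x3 (bet x3 x4 c)
  else if x3 ≤ x1 - t then CondT k x2 (x1 - t) x3 (bet x3 x4 c)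
  else if x4 ≤ x1 - t then CondT k x2 x3 (x1 - t) (bet (x1 - t) x4 c)
  else CondT k x2 x3 x4 (c - 3)

lemma bet_char (x3 x4 c : ℕ) (h34 : x4 ≤ x3) :
    (x3 = 0 ∧ bet x3 x4 c = 0) ∨ (1 ≤ x3 ∧ x4 < x3 ∧ bet x3 x4 c = 1) ∨
    (1 ≤ x3 ∧ x4 = x3 ∧ bet x3 x4 c = c - 2) := by
  unfold bet; split_ifs with h1 h2
  · exact Or.inl ⟨h1, rfl⟩
  · exact Or.inr (Or.inl ⟨by omega, h2, rfl⟩)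
  · exact Or.inr (Or.inr ⟨by omega, by omega, rfl⟩)

theorem core_fwd (k : ℕ) (hk : 2 ≤ k) (x1 x2 x3 x4 c t : ℕ)
    (h12 : x2 ≤ x1) (h23 : x3 ≤ x2) (h34 : x4 ≤ x3) (hc : 4 ≤ c)
    (hC : CondT k x1 x2 x3 (bet x3 x4 c))
    (ht1 : 1 ≤ t) (htx : t ≤ x1) (htk : t ≤ k) (hF : FT k x1 x2 x3 x4 c t) : False := by
  have hb3 := bet_char x3 x4 c h34
  have hA := R_sub_char k h12
  have hB := R_sub_char k h23
  have hL1 := R_lt k x1; have hL2 := R_lt k x2; have hL3 := R_lt k x3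
  have hLA := R_lt k (x1 - x2); have hLB := R_lt k (x2 - x3)
  have hAle := R_le k (x1 - x2)
  have hRt : R k t = t := R_small (by omega)
  simp only [FT] at hF
  split_ifs at hF with h1 h2 h3
  · -- region A : x2 ≤ x1 - t
    simp only [CondT, KNice, KGood, Nat.even_iff, Nat.odd_iff] at hC hF
    have e1 : x1 - t - x2 = (x1 - x2) - t := by omega
    rw [e1] at hF
    have hA' := R_sub_char k (a := x1 - x2) (b := t) (by omega)
    have hV := R_sub_char k (a := x1) (b := t) htx
    rw [hRt] at hA' hV
    omega
  · -- region B : x3 ≤ x1 - t < x2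
    have hs : R k (x2 - (x1 - t)) = x2 - (x1 - t) := R_small (by omega)
    simp only [CondT, KNice, KGood, Nat.even_iff, Nat.odd_iff] at hC hF
    have e2 : x1 - t - x3 = (x2 - x3) - (x2 - (x1 - t)) := by omega
    rw [e2] at hF
    have hB' := R_sub_char k (a := x2 - x3) (b := x2 - (x1 - t)) (by omega)
    rw [hs] at hB'
    have hV := R_sub_char k (a := x2) (b := x2 - (x1 - t)) (by omega)
    rw [hs] at hV
    have e3 : x2 - (x2 - (x1 - t)) = x1 - t := by omega
    rw [e3] at hV
    have hA' : R k (x1 - x2) = x1 - x2 := R_small (by omega)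
    omega
  · -- region C : x4 ≤ x1 - t < x3
    have hb3' := bet_char (x1 - t) x4 c h3
    have hs : R k (x3 - (x1 - t)) = x3 - (x1 - t) := R_small (by omega)
    have hA' : R k (x1 - x2) = x1 - x2 := R_small (by omega)
    have hB' : R k (x2 - x3) = x2 - x3 := R_small (by omega)
    have hm1 : x1 < k+1 → R k x1 = x1 := fun h => R_small h
    have hm2 : x2 < k+1 → R k x2 = x2 := fun h => R_small h
    have hm3 : x3 < k+1 → R k x3 = x3 := fun h => R_small h
    simp only [CondT, KNice, KGood, Nat.even_iff, Nat.odd_iff] at hC hF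
    omega
  · -- region D : x1 - t < x4
    have hs : R k (x3 - x4) = x3 - x4 := R_small (by omega)
    have hA' : R k (x1 - x2) = x1 - x2 := R_small (by omega)
    have hB' : R k (x2 - x3) = x2 - x3 := R_small (by omega)
    have hm1 : x1 < k+1 → R k x1 = x1 := fun h => R_small h
    have hm2 : x2 < k+1 → R k x2 = x2 := fun h => R_small h
    have hm3 : x3 < k+1 → R k x3 = x3 := fun h => R_small h
    simp only [CondT, KNice, KGood, Nat.even_iff, Nat.odd_iff] at hC hF
    omega

lemma R_R (k a : ℕ) : R k (R k a) = R k a := R_small (R_lt k a)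

lemma FT_A {k x1 x2 x3 x4 c t : ℕ} (h : x2 ≤ x1 - t)
    (hG : CondT k (x1 - t) x2 x3 (bet x3 x4 c)) : FT k x1 x2 x3 x4 c t := by
  unfold FT; rw [if_pos h]; exact hG

lemma FT_B {k x1 x2 x3 x4 c t : ℕ} (h1 : ¬ x2 ≤ x1 - t) (h2 : x3 ≤ x1 - t)
    (hG : CondT k x2 (x1 - t) x3 (bet x3 x4 c)) : FT k x1 x2 x3 x4 c t := by
  unfold FT; rw [if_neg h1, if_pos h2]; exact hG

lemma FT_C {k x1 x2 x3 x4 c t : ℕ} (h1 : ¬ x2 ≤ x1 - t) (h2 : ¬ x3 ≤ x1 - t)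
    (h3 : x4 ≤ x1 - t)
    (hG : CondT k x2 x3 (x1 - t) (bet (x1 - t) x4 c)) : FT k x1 x2 x3 x4 c t := by
  unfold FT; rw [if_neg h1, if_neg h2, if_pos h3]; exact hG

lemma FT_D {k x1 x2 x3 x4 c t : ℕ} (h1 : ¬ x2 ≤ x1 - t) (h2 : ¬ x3 ≤ x1 - t)
    (h3 : ¬ x4 ≤ x1 - t)
    (hG : CondT k x2 x3 x4 (c - 3)) : FT k x1 x2 x3 x4 c t := by
  unfold FT; rw [if_neg h1, if_neg h2, if_neg h3]; exact hG

theorem core_bwd (k : ℕ) (hk : 2 ≤ k) (x1 x2 x3 x4 c : ℕ)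
    (h12 : x2 ≤ x1) (h23 : x3 ≤ x2) (h34 : x4 ≤ x3) (hc : 4 ≤ c) (hx1 : 1 ≤ x1)
    (hC : ¬ CondT k x1 x2 x3 (bet x3 x4 c)) :
    ∃ t, 1 ≤ t ∧ t ≤ min x1 k ∧ FT k x1 x2 x3 x4 c t := by
  have hb3 := bet_char x3 x4 c h34
  have hL1 := R_lt k x1; have hL2 := R_lt k x2; have hL3 := R_lt k x3
  have hLA := R_lt k (x1 - x2); have hLB := R_lt k (x2 - x3)
  have hAle := R_le k (x1 - x2); have hBle := R_le k (x2 - x3)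
  have hX1le := R_le k x1
  simp only [CondT, KNice, KGood, Nat.even_iff, Nat.odd_iff] at hC
  by_cases hcE : x3 ≤ 1 ∧ bet x3 x4 c % 2 = 0
  · obtain ⟨hx31, hbe⟩ := hcE
    by_cases hX2 : R k x2 = 1
    · -- E1 : t = R k x1
      have hT1 : 1 ≤ R k x1 := by omega
      have hV : R k (x1 - R k x1) = 0 := by
        have h' := R_sub_char k (a := x1) (b := R k x1) hX1le
        rw [R_R] at h'; omega
      have hB0 : x3 = 1 → R k (x2 - x3) = 0 := by
        intro h
        have hB := R_sub_char k h23
        have hm3 : R k x3 = x3 := R_small (by omega)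
        omega
      refine ⟨R k x1, hT1, by omega, ?_⟩
      clear hC hAle hBle
      by_cases h1 : x2 ≤ x1 - R k x1
      · exact FT_A h1 (Or.inl ⟨hx31, Nat.even_iff.mpr hbe, Or.inl ⟨hV, hX2⟩⟩)
      · by_cases h2 : x3 ≤ x1 - R k x1
        · exact FT_B h1 h2 (Or.inl ⟨hx31, Nat.even_iff.mpr hbe, Or.inr (Or.inr ⟨hX2, hV⟩)⟩)
        · by_cases h3 : x4 ≤ x1 - R k x1
          · exact absurd rfl (by omega : ¬ (0:ℕ) = 0)
          · exact FT_D h1 h2 h3 (Or.inr (Or.inl ⟨by omega, Nat.odd_iff.mpr (by omega),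
              by omega⟩))
    · by_cases hX2' : 2 ≤ R k x2
      · -- E2 : t = A
        have hT1 : 1 ≤ R k (x1 - x2) := by omega
        clear hC hb3
        have hreg : x2 ≤ x1 - R k (x1 - x2) := by omega
        have hA0 : R k (x1 - R k (x1 - x2) - x2) = 0 := by
          rw [show x1 - R k (x1-x2) - x2 = (x1 - x2) - R k (x1 - x2) from by omega]
          have h' := R_sub_char k (a := x1 - x2) (b := R k (x1 - x2)) hAle
          rw [R_R] at h'; omega
        exact ⟨R k (x1 - x2), hT1, by omega,
          FT_A hreg (Or.inl ⟨hx31, Nat.even_iff.mpr hbe, Or.inr (Or.inl ⟨hA0, hX2'⟩)⟩)⟩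
      · by_cases hX1 : R k x1 = 0
        · -- E3 : t = k
          have hm1 : x1 < k + 1 → R k x1 = x1 := fun h => R_small h
          have hkx : k + 1 ≤ x1 := by omega
          clear hC hb3
          have hV : R k (x1 - k) = 1 := by
            have h' := R_sub_char k (a := x1) (b := k) (by omega)
            rw [R_small (k := k) (a := k) (by omega)] at h'; omega
          refine ⟨k, by omega, by omega, ?_⟩
          clear hAle hBle
          by_cases h1 : x2 ≤ x1 - k
          · exact FT_A h1 (Or.inl ⟨hx31, Nat.even_iff.mpr hbe, Or.inr (Or.inr ⟨hV, by omega⟩)⟩)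
          · have h2 : x3 ≤ x1 - k := by omega
            exact FT_B h1 h2 (Or.inl ⟨hx31, Nat.even_iff.mpr hbe, Or.inl ⟨by omega, hV⟩⟩)
        · -- E4 : t = R k x1 - 1
          have hT2 : 2 ≤ R k x1 := by omega
          clear hC hb3
          have hV : R k (x1 - (R k x1 - 1)) = 1 := by
            have h' := R_sub_char k (a := x1) (b := R k x1 - 1) (by omega)
            rw [R_small (k := k) (a := R k x1 - 1) (by omega)] at h'; omega
          refine ⟨R k x1 - 1, by omega, by omega, ?_⟩
          clear hAle hBle
          by_cases h1 : x2 ≤ x1 - (R k x1 - 1)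
          · exact FT_A h1 (Or.inl ⟨hx31, Nat.even_iff.mpr hbe, Or.inr (Or.inr ⟨hV, by omega⟩)⟩)
          · have h2 : x3 ≤ x1 - (R k x1 - 1) := by omega
            exact FT_B h1 h2 (Or.inl ⟨hx31, Nat.even_iff.mpr hbe, Or.inl ⟨by omega, hV⟩⟩)
  · by_cases hcO : x3 ≤ 1 ∨ bet x3 x4 c % 2 = 0
    · -- O : t = A, (x3 ≤ 1 ∧ odd) or (2 ≤ x3 ∧ even)
      have hT1 : 1 ≤ R k (x1 - x2) := by omega
      clear hC hb3
      have hreg : x2 ≤ x1 - R k (x1 - x2) := by omega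
      have hA0 : R k (x1 - R k (x1 - x2) - x2) = 0 := by
        rw [show x1 - R k (x1-x2) - x2 = (x1 - x2) - R k (x1 - x2) from by omega]
        have h' := R_sub_char k (a := x1 - x2) (b := R k (x1 - x2)) hAle
        rw [R_R] at h'; omega
      refine ⟨R k (x1 - x2), hT1, by omega, FT_A hreg ?_⟩
      rcases le_or_gt x3 1 with h | h
      · exact Or.inr (Or.inl ⟨h, Nat.odd_iff.mpr (by omega), hA0⟩)
      · exact Or.inr (Or.inr (Or.inl ⟨h, Nat.even_iff.mpr (by omega), hA0⟩))
    · -- class 21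
      have hx32 : 2 ≤ x3 := by omega
      have hbo : bet x3 x4 c % 2 = 1 := by omega
      by_cases hg1 : 1 ≤ R k (x2 - x3) ∧ R k (x2 - x3) ≤ k - 1
      · -- G1 : t = A
        have hT1 : 1 ≤ R k (x1 - x2) := by omega
        clear hC hb3
        have hreg : x2 ≤ x1 - R k (x1 - x2) := by omega
        have hA0 : R k (x1 - R k (x1 - x2) - x2) = 0 := by
          rw [show x1 - R k (x1-x2) - x2 = (x1 - x2) - R k (x1 - x2) from by omega]
          have h' := R_sub_char k (a := x1 - x2) (b := R k (x1 - x2)) hAle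
          rw [R_R] at h'; omega
        exact ⟨R k (x1 - x2), hT1, by omega, FT_A hreg (Or.inr (Or.inr (Or.inr
          ⟨hx32, Nat.odd_iff.mpr hbo, Or.inr (Or.inl ⟨hA0, hg1.1, hg1.2⟩)⟩)))⟩
      · by_cases hg2 : R k (x2 - x3) = 0
        · -- G2 : t = A + 1
          have hAk : R k (x1 - x2) ≤ k - 1 := by omega
          clear hC
          have hTb : R k (x1 - x2) + 1 ≤ x1 ∧ R k (x1 - x2) + 1 ≤ k := by omega
          refine ⟨R k (x1 - x2) + 1, by omega, by omega, ?_⟩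
          by_cases h1 : x2 ≤ x1 - (R k (x1 - x2) + 1)
          · -- region A: A' = k
            have hAk' : R k (x1 - (R k (x1 - x2) + 1) - x2) = k := by
              rw [show x1 - (R k (x1 - x2) + 1) - x2 = (x1 - x2) - (R k (x1 - x2) + 1) from by omega]
              have h' := R_sub_char k (a := x1 - x2) (b := (R k (x1 - x2) + 1)) (by omega)
              rw [R_small (k := k) (a := (R k (x1 - x2) + 1)) (by omega)] at h'
              omega
            exact FT_A h1 (Or.inr (Or.inr (Or.inr ⟨hx32, Nat.odd_iff.mpr hbo,
              Or.inl ⟨hAk', hg2⟩⟩)))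
          · by_cases h2 : x3 ≤ x1 - (R k (x1 - x2) + 1)
            · -- region B: s = 1, good case3
              have hs1 : R k (x2 - (x1 - (R k (x1 - x2) + 1))) = 1 := by
                rw [show x2 - (x1 - (R k (x1 - x2) + 1)) = 1 from by omega]
                exact R_small (by omega)
              have hvB : R k (x1 - (R k (x1 - x2) + 1) - x3) = k := by
                rw [show x1 - (R k (x1 - x2) + 1) - x3 = (x2 - x3) - (x2 - (x1 - (R k (x1 - x2) + 1))) from by omega]
                have h' := R_sub_char k (a := x2 - x3) (b := x2 - (x1 - (R k (x1 - x2) + 1))) (by omega)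
                rw [R_small (k := k) (a := x2 - (x1 - (R k (x1 - x2) + 1))) (by omega)] at h'
                omega
              exact FT_B h1 h2 (Or.inr (Or.inr (Or.inr ⟨hx32, Nat.odd_iff.mpr hbo,
                Or.inr (Or.inr ⟨hs1, hvB⟩)⟩)))
            · by_cases h3 : x4 ≤ x1 - (R k (x1 - x2) + 1)
              · -- region C: v = x3 - 1
                have hveq : x1 - (R k (x1 - x2) + 1) = x3 - 1 := by omega
                have hs1 : R k (x3 - (x1 - (R k (x1 - x2) + 1))) = 1 := by
                  rw [show x3 - (x1 - (R k (x1 - x2) + 1)) = 1 from by omega]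
                  exact R_small (by omega)
                have hb4 := bet_char (x1 - (R k (x1 - x2) + 1)) x4 c h3
                have hm3 : x3 < k + 1 → R k x3 = x3 := fun h => R_small h
                refine FT_C h1 h2 h3 ?_
                clear hb3
                simp only [CondT, KNice, KGood, Nat.even_iff, Nat.odd_iff]
                omega
              · -- region D: x4 = x3 = x2
                have hx42 : x4 = x3 ∧ x3 = x2 := by omega
                refine FT_D h1 h2 h3 (Or.inr (Or.inr (Or.inl ⟨by omega,
                  Nat.even_iff.mpr (by omega), ?_⟩)))
                omega
        · by_cases hg3 : 2 ≤ R k (x1 - x2)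
          · -- G3 : t = A - 1
            have hBk : R k (x2 - x3) = k := by omega
            clear hC hb3
            have hreg : x2 ≤ x1 - (R k (x1 - x2) - 1) := by omega
            have hA1 : R k (x1 - (R k (x1 - x2) - 1) - x2) = 1 := by
              rw [show x1 - (R k (x1 - x2) - 1) - x2 = (x1 - x2) - (R k (x1 - x2) - 1) from by omega]
              have h' := R_sub_char k (a := x1 - x2) (b := (R k (x1 - x2) - 1)) (by omega)
              rw [R_small (k := k) (a := (R k (x1 - x2) - 1)) (by omega)] at h'
              omega
            exact ⟨(R k (x1 - x2) - 1), by omega, by omega, FT_A hreg (Or.inr (Or.inr (Or.inr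
              ⟨hx32, Nat.odd_iff.mpr hbo, Or.inr (Or.inr ⟨hA1, hBk⟩)⟩)))⟩
          · -- G4 : t = k, A = 0
            have hBk : R k (x2 - x3) = k := by omega
            have hA0 : R k (x1 - x2) = 0 := by omega
            clear hC hb3
            have hmB : x2 - x3 < k + 1 → R k (x2 - x3) = x2 - x3 := fun h => R_small h
            have hd2 : k ≤ x2 - x3 := by omega
            refine ⟨k, by omega, by omega, ?_⟩
            by_cases h1 : x2 ≤ x1 - k
            · have hA1 : R k (x1 - k - x2) = 1 := by
                rw [show x1 - k - x2 = (x1 - x2) - k from by omega]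
                have h' := R_sub_char k (a := x1 - x2) (b := k) (by omega)
                rw [R_small (k := k) (a := k) (by omega)] at h'
                omega
              exact FT_A h1 (Or.inr (Or.inr (Or.inr ⟨hx32, Nat.odd_iff.mpr hbo,
                Or.inr (Or.inr ⟨hA1, hBk⟩)⟩)))
            · -- region B: s = k
              have hmA : x1 - x2 < k + 1 → R k (x1 - x2) = x1 - x2 := fun h => R_small h
              have hd1 : x1 = x2 := by omega
              have h2 : x3 ≤ x1 - k := by omega
              have hs1 : R k (x2 - (x1 - k)) = k := by
                rw [show x2 - (x1 - k) = k from by omega]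
                exact R_small (by omega)
              have hvB : R k (x1 - k - x3) = 0 := by
                rw [show x1 - k - x3 = (x2 - x3) - (x2 - (x1 - k)) from by omega]
                have h' := R_sub_char k (a := x2 - x3) (b := x2 - (x1 - k)) (by omega)
                rw [R_small (k := k) (a := x2 - (x1 - k)) (by omega)] at h'
                omega
              exact FT_B h1 h2 (Or.inr (Or.inr (Or.inr ⟨hx32, Nat.odd_iff.mpr hbo,
                Or.inl ⟨hs1, hvB⟩⟩)))

theorem core_iff (k : ℕ) (hk : 2 ≤ k) (x1 x2 x3 x4 c : ℕ)
    (h12 : x2 ≤ x1) (h23 : x3 ≤ x2) (h34 : x4 ≤ x3) (hc : 4 ≤ c) :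
    CondT k x1 x2 x3 (bet x3 x4 c) ↔
      (1 ≤ x1 ∧ ∀ t, 1 ≤ t → t ≤ min x1 k → ¬ FT k x1 x2 x3 x4 c t) := by
  constructor
  · intro hC
    have hx1 : 1 ≤ x1 := by
      by_contra h
      have hb := bet_char x3 x4 c h34
      have e1 : R k (x1 - x2) = 0 := by
        rw [show x1 - x2 = 0 from by omega]; exact R_small (by omega)
      have e2 : R k x1 = 0 := by
        rw [show x1 = 0 from by omega]; exact R_small (by omega)
      have e3 : R k x2 = 0 := by
        rw [show x2 = 0 from by omega]; exact R_small (by omega)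
      simp only [CondT, KNice, KGood, Nat.even_iff, Nat.odd_iff] at hC
      omega
    exact ⟨hx1, fun t ht1 ht2 hF => core_fwd k hk x1 x2 x3 x4 c t h12 h23 h34 hc hC ht1
      (le_trans ht2 (min_le_left _ _)) (le_trans ht2 (min_le_right _ _)) hF⟩
  · rintro ⟨hx1, hall⟩
    by_contra hC
    obtain ⟨t, ha, hb, hc'⟩ := core_bwd k hk x1 x2 x3 x4 c h12 h23 h34 hc hx1 hC
    exact hall t ha hb hc'

-- (1) position/count lemma
lemma sorted_getD_iff {S : List ℕ} (hs : S.Pairwise (· ≥ ·)) (w : ℕ) :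
    ∀ i, i < S.length → (w ≤ S.getD i 0 ↔ i < S.countP (fun x => decide (w ≤ x))) := by
  induction S with
  | nil => intro i hi; simp at hi
  | cons a T ih =>
    intro i hi
    have hT : T.Pairwise (· ≥ ·) := hs.of_cons
    have ha : ∀ y ∈ T, y ≤ a := fun y hy => (List.pairwise_cons.mp hs).1 y hy
    rw [List.countP_cons]
    cases i with
    | zero =>
      simp only [List.getD_cons_zero]
      constructor
      · intro hwa
        have : (decide (w ≤ a)) = true := by simpa using hwa
        simp [this]
      · intro h
        by_contra hwa
        have h0 : T.countP (fun x => decide (w ≤ x)) = 0 := by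
          rw [List.countP_eq_zero]
          intro y hy
          simp only [decide_eq_true_eq]
          have := ha y hy; omega
        have : (decide (w ≤ a)) = false := by simp; omega
        rw [this] at h; simp [h0] at h
    | succ j =>
      simp only [List.getD_cons_succ]
      rw [ih hT j (by simpa using hi)]
      rcases le_or_gt w a with hwa | hwa
      · have : (decide (w ≤ a)) = true := by simpa using hwa
        simp [this]
      · have h0 : T.countP (fun x => decide (w ≤ x)) = 0 := by
          rw [List.countP_eq_zero]
          intro y hy
          simp only [decide_eq_true_eq]
          have := ha y hy; omega
        have : (decide (w ≤ a)) = false := by simp; omega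
        simp [this, h0]

lemma sorted_getD_le {S : List ℕ} (hs : S.Pairwise (· ≥ ·)) {i j : ℕ} (hij : i ≤ j)
    (hj : j < S.length) : S.getD j 0 ≤ S.getD i 0 := by
  rcases eq_or_lt_of_le hij with rfl | hlt
  · exact le_refl _
  · have hp := List.pairwise_iff_getElem.mp hs
    rw [List.getD_eq_getElem _ _ hj, List.getD_eq_getElem _ _ (lt_trans hlt hj)]
    exact hp i j (lt_trans hlt hj) hj hlt

lemma sSup_eq_cnt {S : List ℕ} (hs : S.Pairwise (· ≥ ·)) (hlen : 3 ≤ S.length)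
    (h3 : 1 ≤ heap S 3) :
    sSup {j : ℕ | 1 ≤ j ∧ j ≤ S.length ∧ heap S j = heap S 3}
      = S.countP (fun x => decide (heap S 3 ≤ x)) := by
  have hgd : S.getD 2 0 = heap S 3 := rfl
  have hcle : S.countP (fun x => decide (heap S 3 ≤ x)) ≤ S.length :=
    List.countP_le_length
  have h2cnt : 2 < S.countP (fun x => decide (heap S 3 ≤ x)) :=
    (sorted_getD_iff hs (heap S 3) 2 (by omega)).mp (le_of_eq hgd.symm)
  refine IsGreatest.csSup_eq ⟨⟨by omega, hcle, ?_⟩, ?_⟩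
  · show S.getD (S.countP (fun x => decide (heap S 3 ≤ x)) - 1) 0 = heap S 3
    have hge : heap S 3 ≤ S.getD (S.countP (fun x => decide (heap S 3 ≤ x)) - 1) 0 :=
      (sorted_getD_iff hs (heap S 3) _ (by omega)).mpr (by omega)
    have hle : S.getD (S.countP (fun x => decide (heap S 3 ≤ x)) - 1) 0 ≤ S.getD 2 0 :=
      sorted_getD_le hs (by omega) (by omega)
    omega
  · rintro j ⟨hj1, hj2, hj3⟩
    have : heap S 3 ≤ S.getD (j - 1) 0 := le_of_eq hj3.symm
    have := (sorted_getD_iff hs (heap S 3) (j-1) (by omega)).mp this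
    omega

lemma beta_cons (x1 x2 x3 x4 : ℕ) (L : List ℕ) (hs : (x1::x2::x3::x4::L).Pairwise (· ≥ ·)) :
    beta (x1::x2::x3::x4::L)
      = bet x3 x4 ((x1::x2::x3::x4::L).countP (fun x => decide (x4 ≤ x))) := by
  have h1 := (List.pairwise_cons.mp hs).1
  have hs2 := hs.of_cons
  have h2 := (List.pairwise_cons.mp hs2).1
  have hs3 := hs2.of_cons
  have h3 := (List.pairwise_cons.mp hs3).1
  have hs4 := hs3.of_cons
  have h4 := (List.pairwise_cons.mp hs4).1
  have h12 : x2 ≤ x1 := h1 x2 (by simp)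
  have h23 : x3 ≤ x2 := h2 x3 (by simp)
  have h34 : x4 ≤ x3 := h3 x4 (by simp)
  have hheap3 : heap (x1::x2::x3::x4::L) 3 = x3 := rfl
  unfold beta
  by_cases h30 : x3 = 0
  · rw [if_pos (show heap (x1::x2::x3::x4::L) 3 = 0 from by rw [hheap3]; exact h30)]
    unfold bet
    rw [if_pos h30]
  · rw [if_neg (show ¬ heap (x1::x2::x3::x4::L) 3 = 0 from by rw [hheap3]; exact h30)]
    rw [sSup_eq_cnt hs (by simp) (by rw [hheap3]; omega)]
    simp only [hheap3]
    by_cases h43 : x4 < x3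
    · have hcnt3 : (x1::x2::x3::x4::L).countP (fun x => decide (x3 ≤ x)) = 3 := by
        have hL0 : L.countP (fun x => decide (x3 ≤ x)) = 0 := by
          rw [List.countP_eq_zero]
          intro y hy
          simp only [decide_eq_true_eq]
          have := h4 y hy; omega
        rw [List.countP_cons, List.countP_cons, List.countP_cons, List.countP_cons, hL0]
        simp only [decide_eq_true_eq]
        rw [if_pos (show x3 ≤ x1 by omega), if_pos (show x3 ≤ x2 by omega),
            if_pos (show x3 ≤ x3 from le_refl _), if_neg (show ¬ x3 ≤ x4 by omega)]
      rw [hcnt3]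
      unfold bet
      rw [if_neg h30, if_pos h43]
    · have h43' : x4 = x3 := by omega
      subst h43'
      unfold bet
      rw [if_neg h30, if_neg h43]

lemma heap1_cons (a : ℕ) (l : List ℕ) : heap (a::l) 1 = a := rfl
lemma heap2_cons (a b : ℕ) (l : List ℕ) : heap (a::b::l) 2 = b := rfl
lemma heap3_cons (a b c : ℕ) (l : List ℕ) : heap (a::b::c::l) 3 = c := rfl

lemma cnt_eq {x1 x4 t : ℕ} (T : List ℕ) (E : List ℕ)
    (hperm : E.Perm ((x1-t)::T)) (h1 : x4 ≤ x1 - t) (h2 : x4 ≤ x1) :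
    E.countP (fun x => decide (x4 ≤ x)) = (x1::T).countP (fun x => decide (x4 ≤ x)) := by
  rw [hperm.countP_eq, List.countP_cons (a := x1 - t), List.countP_cons (a := x1)]
  simp only [decide_eq_true_eq]
  rw [if_pos h1, if_pos h2]

lemma bridge (k x1 x2 x3 x4 : ℕ) (L : List ℕ) (t : ℕ)
    (hs : (x1::x2::x3::x4::L).Pairwise (· ≥ ·)) (htx : t ≤ x1) :
    (CondT k (heap (List.orderedInsert (· ≥ ·) (x1 - t) (x2::x3::x4::L)) 1)
            (heap (List.orderedInsert (· ≥ ·) (x1 - t) (x2::x3::x4::L)) 2)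
            (heap (List.orderedInsert (· ≥ ·) (x1 - t) (x2::x3::x4::L)) 3)
            (beta (List.orderedInsert (· ≥ ·) (x1 - t) (x2::x3::x4::L)))
      ↔ FT k x1 x2 x3 x4 ((x1::x2::x3::x4::L).countP (fun x => decide (x4 ≤ x))) t) := by
  have h1 := (List.pairwise_cons.mp hs).1
  have hs2 := hs.of_cons
  have h2 := (List.pairwise_cons.mp hs2).1
  have hs3 := hs2.of_cons
  have h3 := (List.pairwise_cons.mp hs3).1
  have hs4 := hs3.of_cons
  have h4 := (List.pairwise_cons.mp hs4).1
  have h12 : x2 ≤ x1 := h1 x2 (by simp)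
  have h23 : x3 ≤ x2 := h2 x3 (by simp)
  have h34 : x4 ≤ x3 := h3 x4 (by simp)
  have hsort' : (List.orderedInsert (· ≥ ·) (x1 - t) (x2::x3::x4::L)).Pairwise (· ≥ ·) :=
    hs2.orderedInsert _ _
  have hperm0 : (List.orderedInsert (· ≥ ·) (x1 - t) (x2::x3::x4::L)).Perm
      ((x1-t)::x2::x3::x4::L) := List.perm_orderedInsert _ _ _
  rcases le_or_gt x2 (x1 - t) with hr1 | hr1
  · -- region A
    have hS' : List.orderedInsert (· ≥ ·) (x1 - t) (x2::x3::x4::L)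
        = (x1-t)::x2::x3::x4::L := by
      simp [List.orderedInsert, hr1]
    rw [hS'] at hsort' hperm0 ⊢
    rw [beta_cons _ _ _ _ _ hsort',
      cnt_eq (x2::x3::x4::L) _ hperm0 (by omega) (by omega)]
    unfold FT
    rw [if_pos hr1, heap1_cons, heap2_cons, heap3_cons]
  · rcases le_or_gt x3 (x1 - t) with hr2 | hr2
    · -- region B
      have hS' : List.orderedInsert (· ≥ ·) (x1 - t) (x2::x3::x4::L)
          = x2::(x1-t)::x3::x4::L := by
        simp [List.orderedInsert, hr2, not_le.mpr hr1, le_of_lt hr1]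
      rw [hS'] at hsort' hperm0 ⊢
      rw [beta_cons _ _ _ _ _ hsort',
        cnt_eq (x2::x3::x4::L) _ hperm0 (by omega) (by omega)]
      unfold FT
      rw [if_neg (not_le.mpr hr1), if_pos hr2, heap1_cons, heap2_cons, heap3_cons]
    · rcases le_or_gt x4 (x1 - t) with hr3 | hr3
      · -- region C
        have hS' : List.orderedInsert (· ≥ ·) (x1 - t) (x2::x3::x4::L)
            = x2::x3::(x1-t)::x4::L := by
          simp [List.orderedInsert, hr3, not_le.mpr hr1, not_le.mpr hr2,
            le_of_lt hr1, le_of_lt hr2]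
        rw [hS'] at hsort' hperm0 ⊢
        rw [beta_cons _ _ _ _ _ hsort',
          cnt_eq (x2::x3::x4::L) _ hperm0 (by omega) (by omega)]
        unfold FT
        rw [if_neg (not_le.mpr hr1), if_neg (not_le.mpr hr2), if_pos hr3,
          heap1_cons, heap2_cons, heap3_cons]
      · -- region D
        obtain ⟨y, M, hyM⟩ : ∃ y M, List.orderedInsert (· ≥ ·) (x1-t) L = y :: M := by
          cases hL : List.orderedInsert (· ≥ ·) (x1-t) L with
          | nil =>
            have := List.orderedInsert_length (· ≥ ·) L (x1-t)
            rw [hL] at this; simp at this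
          | cons y M => exact ⟨y, M, rfl⟩
        have hS' : List.orderedInsert (· ≥ ·) (x1 - t) (x2::x3::x4::L)
            = x2::x3::x4::y::M := by
          simp [List.orderedInsert, not_le.mpr hr1, not_le.mpr hr2, not_le.mpr hr3,
            le_of_lt hr1, le_of_lt hr2, le_of_lt hr3]
          exact hyM
        rw [hS'] at hsort' hperm0 ⊢
        rw [beta_cons _ _ _ _ _ hsort']
        have hy4 : y ≤ x4 := by
          have hymem : y ∈ List.orderedInsert (· ≥ ·) (x1-t) L := by
            rw [hyM]; simp
          rcases (List.mem_orderedInsert _).mp hymem with h | h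
          · omega
          · exact h4 y h
        have hyM_sorted : (y::M).Pairwise (· ≥ ·) := hsort'.of_cons.of_cons.of_cons
        have hbet : bet x4 y ((x2::x3::x4::y::M).countP (fun x => decide (y ≤ x)))
            = (x1::x2::x3::x4::L).countP (fun x => decide (x4 ≤ x)) - 3 := by
          rcases eq_or_lt_of_le hy4 with hy | hy
          · -- y = x4
            rw [hy] at hperm0 ⊢
            have hcnt : ((x2::x3::x4::x4::M).countP (fun x => decide (x4 ≤ x)))
                = (x1::x2::x3::x4::L).countP (fun x => decide (x4 ≤ x)) - 1 := by
              rw [hperm0.countP_eq, List.countP_cons (a := x1 - t),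
                List.countP_cons (a := x1)]
              simp only [decide_eq_true_eq]
              rw [if_neg (show ¬ x4 ≤ x1 - t by omega), if_pos (show x4 ≤ x1 by omega)]
              omega
            rw [hcnt]
            unfold bet
            rw [if_neg (show ¬ x4 = 0 by omega), if_neg (lt_irrefl x4)]
            omega
          · -- y < x4
            have hL4 : ∀ z ∈ L, z ≤ y := by
              intro z hz
              have hzmem : z ∈ y :: M := by
                rw [← hyM]
                exact (List.mem_orderedInsert _).mpr (Or.inr hz)
              rcases List.mem_cons.mp hzmem with h | h
              · omega
              · exact (List.pairwise_cons.mp hyM_sorted).1 z h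
            have hL0 : L.countP (fun x => decide (x4 ≤ x)) = 0 := by
              rw [List.countP_eq_zero]
              intro z hz
              simp only [decide_eq_true_eq]
              have := hL4 z hz; omega
            have hc4 : (x1::x2::x3::x4::L).countP (fun x => decide (x4 ≤ x)) = 4 := by
              rw [List.countP_cons, List.countP_cons, List.countP_cons,
                List.countP_cons, hL0]
              simp only [decide_eq_true_eq]
              rw [if_pos (show x4 ≤ x1 by omega), if_pos (show x4 ≤ x2 by omega),
                if_pos (show x4 ≤ x3 by omega), if_pos (le_refl x4)]
            rw [hc4]
            unfold bet
            rw [if_neg (show ¬ x4 = 0 by omega), if_pos hy]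
        rw [hbet]
        unfold FT
        rw [if_neg (not_le.mpr hr1), if_neg (not_le.mpr hr2), if_neg (not_le.mpr hr3),
          heap1_cons, heap2_cons, heap3_cons]


theorem main_ind (k : ℕ) (hk : 2 ≤ k) :
    ∀ (n : ℕ) (S : List ℕ), S.sum ≤ n → 4 ≤ S.length → S.Pairwise (· ≥ ·) →
      (MisereBP k S ↔ CondT k (heap S 1) (heap S 2) (heap S 3) (beta S)) := by
  intro n
  induction n with
  | zero =>
    intro S hsum hlen hsort
    have hz : ∀ x ∈ S, x = 0 := List.sum_eq_zero_iff.mp (by omega)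
    have hheapz : ∀ j, heap S j = 0 := by
      intro j
      unfold heap
      rcases lt_or_ge (j-1) S.length with h | h
      · rw [List.getD_eq_getElem _ _ h]
        exact hz _ (List.getElem_mem _)
      · exact List.getD_eq_default _ _ h
    have hbz : beta S = 0 := by unfold beta; rw [if_pos (hheapz 3)]
    rw [MisereBP]
    constructor
    · rintro ⟨h0, -⟩
      exact absurd (by omega : S.sum = 0) h0
    · intro hC
      rw [hheapz 1, hheapz 2, hheapz 3, hbz] at hC
      have e0 : R k 0 = 0 := R_small (by omega)
      simp only [CondT, KNice, KGood, Nat.even_iff, Nat.odd_iff, Nat.sub_self] at hC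
      omega
  | succ n ih =>
    intro S hsum hlen hsort
    rcases S with _ | ⟨x1, S⟩; · simp at hlen
    rcases S with _ | ⟨x2, S⟩; · simp at hlen
    rcases S with _ | ⟨x3, S⟩; · simp at hlen
    rcases S with _ | ⟨x4, L⟩; · simp at hlen
    have h1 := (List.pairwise_cons.mp hsort).1
    have hs2 := hsort.of_cons
    have h2 := (List.pairwise_cons.mp hs2).1
    have hs3 := hs2.of_cons
    have h3 := (List.pairwise_cons.mp hs3).1
    have h12 : x2 ≤ x1 := h1 x2 (by simp)
    have h23 : x3 ≤ x2 := h2 x3 (by simp)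
    have h34 : x4 ≤ x3 := h3 x4 (by simp)
    have hc : 4 ≤ (x1::x2::x3::x4::L).countP (fun x => decide (x4 ≤ x)) := by
      rw [List.countP_cons, List.countP_cons, List.countP_cons, List.countP_cons]
      simp only [decide_eq_true_eq]
      rw [if_pos (show x4 ≤ x1 by omega), if_pos (show x4 ≤ x2 by omega),
        if_pos (show x4 ≤ x3 by omega), if_pos (le_refl x4)]
      omega
    rw [MisereBP, heap1_cons, heap2_cons, heap3_cons, beta_cons _ _ _ _ _ hsort]
    rw [core_iff k hk x1 x2 x3 x4 _ h12 h23 h34 hc]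
    constructor
    · rintro ⟨h0, hall⟩
      have hx1 : 1 ≤ x1 := by
        by_contra hx
        have hzz : ∀ x ∈ (x1::x2::x3::x4::L), x = 0 := by
          intro x hx'
          rcases List.mem_cons.mp hx' with h | h
          · omega
          · have := h1 x h; omega
        exact h0 (List.sum_eq_zero_iff.mpr hzz)
      refine ⟨hx1, fun t ht1 ht2 hFT => ?_⟩
      have hBF : BFollower k (x1::x2::x3::x4::L)
          (List.orderedInsert (· ≥ ·) (x1 - t) (x2::x3::x4::L)) := ⟨t, ht1, ht2, rfl⟩
      have hsort' := hs2.orderedInsert (x1 - t) (x2::x3::x4::L)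
      have hlen' : 4 ≤ (List.orderedInsert (· ≥ ·) (x1 - t) (x2::x3::x4::L)).length := by
        rw [List.orderedInsert_length]; simp
      have hsum' : (List.orderedInsert (· ≥ ·) (x1 - t) (x2::x3::x4::L)).sum ≤ n := by
        have hp := (List.perm_orderedInsert (· ≥ ·) (x1 - t) (x2::x3::x4::L)).sum_eq
        simp only [List.sum_cons] at hp hsum ⊢
        rw [hp]
        omega
      exact hall _ hBF ((ih _ hsum' hlen' hsort').mpr
        ((bridge k x1 x2 x3 x4 L t hsort (by omega)).mpr hFT))
    · rintro ⟨hx1, hall⟩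
      refine ⟨by simp only [List.sum_cons]; omega, ?_⟩
      rintro S' ⟨t, ht1, ht2, rfl⟩ hMis
      have ht2' : t ≤ min x1 k := ht2
      have hsort' := hs2.orderedInsert (x1 - t) (x2::x3::x4::L)
      have hlen' : 4 ≤ (List.orderedInsert (· ≥ ·) (x1 - t) (x2::x3::x4::L)).length := by
        rw [List.orderedInsert_length]; simp
      have hsum' : (List.orderedInsert (· ≥ ·) (x1 - t) (x2::x3::x4::L)).sum ≤ n := by
        have hp := (List.perm_orderedInsert (· ≥ ·) (x1 - t) (x2::x3::x4::L)).sum_eq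
        simp only [List.sum_cons] at hp hsum ⊢
        rw [hp]
        omega
      exact hall t ht1 ht2' ((bridge k x1 x2 x3 x4 L t hsort (by omega)).mp
        ((ih _ hsum' hlen' hsort').mp hMis))


theorem stmt3 (k : ℕ) (hk : 2 ≤ k) (S : List ℕ) (hn : 4 ≤ S.length) (hsorted : S.Pairwise (· ≥ ·)) :
    MisereBP k S ↔
      ((heap S 3 ≤ 1 ∧ Even (beta S) ∧ KNice k (heap S 1) (heap S 2)) ∨
       (heap S 3 ≤ 1 ∧ Odd (beta S) ∧ R k (heap S 1 - heap S 2) = 0) ∨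
       (2 ≤ heap S 3 ∧ Even (beta S) ∧ R k (heap S 1 - heap S 2) = 0) ∨
       (2 ≤ heap S 3 ∧ Odd (beta S) ∧ KGood k (heap S 1) (heap S 2) (heap S 3))) := by
  exact main_ind k hk S.sum S le_rfl hn hsorted
end

section
/- A position S = (x_1, ..., x_n) is a P-position in misère Greedy Nim if and only if one of the following holds: (a) x_1 ≤ 1 and α(S) is odd, or (b) x_1 ≥ 2 and α(S) is even. -/
open List
section
lemma headI_mem' {l : List ℕ} (h : l ≠ []) : l.headI ∈ l := by
  cases l with
  | nil => exact absurd rfl h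
  | cons a t => exact mem_cons_self

lemma le_headI_of_mem {l : List ℕ} (hs : l.Pairwise (· ≥ ·)) {x : ℕ} (hx : x ∈ l) :
    x ≤ l.headI := by
  cases l with
  | nil => simp at hx
  | cons a t =>
    rcases mem_cons.1 hx with rfl | hx
    · exact le_rfl
    · exact rel_of_pairwise_cons hs hx

lemma heap_one (S : List ℕ) : heap S 1 = S.headI := by
  cases S <;> simp [heap]

lemma split_max : ∀ (S : List ℕ), S.Pairwise (· ≥ ·) → S ≠ [] →
    ∃ r : List ℕ, S = List.replicate (S.count S.headI) S.headI ++ r ∧ ∀ x ∈ r, x < S.headI := by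
  intro S
  induction S with
  | nil => intro _ h; exact absurd rfl h
  | cons a l ih =>
    intro hs _
    simp only [headI]
    by_cases hla : a ∈ l
    · have hl : l ≠ [] := ne_nil_of_mem hla
      have hsl : l.Pairwise (· ≥ ·) := hs.of_cons
      have hble : l.headI ≤ a := rel_of_pairwise_cons hs (headI_mem' hl)
      have hble' : a ≤ l.headI := le_headI_of_mem hsl hla
      have hba : l.headI = a := _root_.le_antisymm hble hble'
      obtain ⟨r, hr, hrlt⟩ := ih hsl hl
      rw [hba] at hr hrlt
      refine ⟨r, ?_, hrlt⟩
      rw [List.count_cons_self]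
      conv_lhs => rw [hr]
      rw [show a :: (List.replicate (l.count a) a ++ r) =
        (a :: List.replicate (l.count a) a) ++ r from rfl, ← List.replicate_succ]
    · refine ⟨l, ?_, ?_⟩
      · rw [List.count_cons_self, List.count_eq_zero_of_not_mem hla]
        simp [List.replicate]
      · intro x hx
        exact lt_of_le_of_ne (rel_of_pairwise_cons hs hx) (fun h => hla (h ▸ hx : a ∈ l))

lemma getD_replicate' (c a : ℕ) {i : ℕ} (hi : i < c) :
    (List.replicate c a).getD i 0 = a := by
  rw [List.getD_eq_getElem _ _ (by simpa using hi)]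
  simp

lemma alpha_eq_count {S : List ℕ} (hs : S.Pairwise (· ≥ ·)) (hne : S ≠ [])
    (h0 : S.headI ≠ 0) : alpha S = S.count S.headI := by
  obtain ⟨r, hsplit, hrlt⟩ := split_max S hs hne
  have hc1 : 1 ≤ S.count S.headI := List.count_pos_iff.2 (headI_mem' hne)
  have hcn : S.count S.headI ≤ S.length := List.count_le_length
  have hlen : (List.replicate (S.count S.headI) S.headI).length = S.count S.headI :=
    List.length_replicate
  have hheap : ∀ j, 1 ≤ j → j ≤ S.count S.headI → heap S j = S.headI := by
    intro j h1 h2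
    have hj : j - 1 < S.count S.headI := by omega
    conv_lhs => rw [heap, hsplit]
    rw [List.getD_append _ _ _ _ (by omega), getD_replicate' _ _ hj]
  have hheap' : ∀ j, S.count S.headI < j → heap S j ≠ S.headI := by
    intro j hj
    conv_lhs => rw [heap, hsplit]
    rw [List.getD_append_right _ _ _ _ (by omega), hlen]
    by_cases hlt : j - 1 - S.count S.headI < r.length
    · have hmem : r.getD (j - 1 - S.count S.headI) 0 ∈ r := by
        rw [List.getD_eq_getElem _ _ hlt]
        exact List.getElem_mem hlt
      have := hrlt _ hmem
      omega
    · rw [List.getD_eq_default _ _ (by omega)]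
      omega
  have hgreat : IsGreatest {j : ℕ | 1 ≤ j ∧ j ≤ S.length ∧ heap S j = heap S 1}
      (S.count S.headI) := by
    constructor
    · exact ⟨hc1, hcn, by rw [heap_one]; exact hheap _ hc1 le_rfl⟩
    · rintro j ⟨h1, h2, h3⟩
      by_contra h
      exact hheap' j (by omega) (by rwa [heap_one] at h3)
  rw [alpha, if_neg (by rwa [heap_one]), hgreat.csSup_eq]

lemma headI_orderedInsert {l : List ℕ} (hs : l.Pairwise (· ≥ ·)) (hne : l ≠ []) (v : ℕ) :
    (l.orderedInsert (· ≥ ·) v).headI = max v l.headI := by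
  have hperm := List.perm_orderedInsert (· ≥ ·) v l
  have hsorted := hs.orderedInsert v l
  have hne' : l.orderedInsert (· ≥ ·) v ≠ [] := by
    intro h
    have := hperm.length_eq
    simp [h] at this
  apply _root_.le_antisymm
  · have : (l.orderedInsert (· ≥ ·) v).headI ∈ v :: l := hperm.mem_iff.1 (headI_mem' hne')
    rcases mem_cons.1 this with h | h
    · rw [h]; exact le_max_left _ _
    · exact le_trans (le_headI_of_mem hs h) (le_max_right _ _)
  · apply max_le
    · exact le_headI_of_mem hsorted (hperm.mem_iff.2 mem_cons_self)
    · exact le_headI_of_mem hsorted (hperm.mem_iff.2 (mem_cons_of_mem _ (headI_mem' hne)))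

lemma sum_eq_zero_iff_headI {S : List ℕ} (hs : S.Pairwise (· ≥ ·)) (hne : S ≠ []) :
    S.sum = 0 ↔ S.headI = 0 := by
  rw [List.sum_eq_zero_iff]
  constructor
  · intro h; exact h _ (headI_mem' hne)
  · intro h x hx; have := le_headI_of_mem hs hx; omega
end

lemma gfollower_iff {a : ℕ} {l : List ℕ} {S' : List ℕ} :
    GFollower (a :: l) S' ↔ ∃ v, v < a ∧ S' = List.orderedInsert (· ≥ ·) v l := by
  unfold GFollower
  simp only [List.headI, List.tail]
  constructor
  · rintro ⟨t, h1, h2, rfl⟩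
    exact ⟨a - t, by omega, rfl⟩
  · rintro ⟨v, hv, rfl⟩
    exact ⟨a - v, by omega, by omega, by rw [show a - (a - v) = v by omega]⟩

def CondN (S : List ℕ) : Prop :=
  (S.headI = 1 ∧ Odd (S.count 1)) ∨ (2 ≤ S.headI ∧ Even (S.count S.headI))

lemma main_aux : ∀ (N : ℕ) (S : List ℕ), S.sum ≤ N → 4 ≤ S.length → S.Pairwise (· ≥ ·) →
    (MisereGP S ↔ CondN S) := by
  intro N
  induction N with
  | zero =>
    intro S hsum hlen hs
    have hne : S ≠ [] := by intro h; rw [h] at hlen; simp at hlen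
    have h0 : S.headI = 0 := (sum_eq_zero_iff_headI hs hne).1 (by omega)
    rw [MisereGP]
    constructor
    · rintro ⟨h, -⟩; omega
    · rintro (⟨h1, -⟩ | ⟨h2, -⟩) <;> omega
  | succ N ih =>
    intro S hsum hlen hs
    obtain ⟨a, l, rfl⟩ : ∃ a l, S = a :: l := by
      cases S with
      | nil => simp at hlen
      | cons a l => exact ⟨a, l, rfl⟩
    have hlne : l ≠ [] := by intro h; rw [h] at hlen; simp at hlen
    have hsl : l.Pairwise (· ≥ ·) := hs.of_cons
    have hbmem : l.headI ∈ l := headI_mem' hlne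
    have hba : l.headI ≤ a := rel_of_pairwise_cons hs hbmem
    have hsum' : (a :: l).sum = a + l.sum := by simp
    have hfprop : ∀ v, v < a →
        (MisereGP (l.orderedInsert (· ≥ ·) v) ↔ CondN (l.orderedInsert (· ≥ ·) v)) := by
      intro v hv
      have hperm := List.perm_orderedInsert (· ≥ ·) v l
      apply ih
      · rw [hperm.sum_eq]; simp only [List.sum_cons]; omega
      · rw [hperm.length_eq]; simpa using hlen
      · exact hsl.orderedInsert v l
    rw [MisereGP]
    have hfol : (∀ S', GFollower (a :: l) S' → ¬ MisereGP S') ↔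
        (∀ v, v < a → ¬ CondN (l.orderedInsert (· ≥ ·) v)) := by
      constructor
      · intro h v hv
        have := h _ (gfollower_iff.2 ⟨v, hv, rfl⟩)
        rwa [hfprop v hv] at this
      · rintro h S' hG
        obtain ⟨v, hv, rfl⟩ := gfollower_iff.1 hG
        rw [hfprop v hv]
        exact h v hv
    rw [hfol]
    have hDv : ∀ v, CondN (l.orderedInsert (· ≥ ·) v) ↔
        ((max v l.headI = 1 ∧ Odd ((v :: l).count 1)) ∨
         (2 ≤ max v l.headI ∧ Even ((v :: l).count (max v l.headI)))) := by
      intro v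
      have hperm := List.perm_orderedInsert (· ≥ ·) v l
      unfold CondN
      rw [headI_orderedInsert hsl hlne v, hperm.count_eq, hperm.count_eq]
    by_cases ha0 : a = 0
    · subst ha0
      have hz : (0 :: l).sum = 0 := by
        rw [sum_eq_zero_iff_headI hs (by simp)]; rfl
      simp only [CondN, List.headI]
      constructor
      · rintro ⟨h, -⟩; exact absurd hz h
      · rintro (⟨h, -⟩ | ⟨h, -⟩) <;> omega
    · by_cases ha1 : a = 1
      · subst ha1
        have hb1 : l.headI ≤ 1 := hba
        have hbm : l.headI = 1 ↔ 1 ≤ l.count 1 := by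
          constructor
          · intro h; exact List.count_pos_iff.2 (h ▸ hbmem)
          · intro h
            have h1l : (1 : ℕ) ∈ l := List.count_pos_iff.1 h
            have := le_headI_of_mem hsl h1l
            omega
        have hD0 : CondN (l.orderedInsert (· ≥ ·) 0) ↔
            (l.headI = 1 ∧ Odd (l.count 1)) := by
          rw [hDv 0]
          have hmax : max 0 l.headI = l.headI := Nat.zero_max _
          have hcnt : (0 :: l).count 1 = l.count 1 := by simp [List.count_cons]
          rw [hmax, hcnt]
          constructor
          · rintro (h | ⟨h, -⟩)
            · exact h
            · omega
          · intro h; exact Or.inl h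
        have hforall : (∀ v, v < 1 → ¬ CondN (l.orderedInsert (· ≥ ·) v)) ↔
            ¬ CondN (l.orderedInsert (· ≥ ·) 0) := by
          constructor
          · intro h; exact h 0 one_pos
          · intro h v hv; interval_cases v; exact h
        rw [hforall, hD0]
        have hRHS : CondN (1 :: l) ↔ Odd (l.count 1 + 1) := by
          simp only [CondN, List.headI]
          have : (1 :: l).count 1 = l.count 1 + 1 := by simp [List.count_cons]
          rw [this]
          constructor
          · rintro (⟨-, h⟩ | ⟨h, -⟩)
            · exact h
            · omega
          · intro h; exact Or.inl ⟨by simp, h⟩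
        rw [hRHS]
        have hs0 : (1 :: l).sum ≠ 0 := by simp
        rw [Nat.odd_add_one]
        rcases Nat.even_or_odd (l.count 1) with hm | hm
        · have hL : ¬ (l.headI = 1 ∧ Odd (l.count 1)) := by
            rintro ⟨-, h⟩; exact (Nat.not_odd_iff_even.2 hm) h
          constructor
          · intro _; exact Nat.not_odd_iff_even.2 hm
          · intro _; exact ⟨hs0, hL⟩
        · have hm1 : 1 ≤ l.count 1 := by
            rcases hm with ⟨k, hk⟩; omega
          constructor
          · rintro ⟨-, h⟩; exact absurd ⟨hbm.2 hm1, hm⟩ h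
          · intro h; exact absurd hm h
      · have ha2 : 2 ≤ a := by omega
        have hs0 : (a :: l).sum ≠ 0 := by simp; omega
        by_cases hal : a ∈ l
        · have hb : l.headI = a := _root_.le_antisymm hba (le_headI_of_mem hsl hal)
          have hDva : ∀ v, v < a → (CondN (l.orderedInsert (· ≥ ·) v) ↔ Even (l.count a)) := by
            intro v hv
            rw [hDv v, hb]
            have hmax : max v a = a := Nat.max_eq_right hv.le
            have hcnt : (v :: l).count a = l.count a := by
              simp [List.count_cons]; omega
            rw [hmax, hcnt]
            constructor
            · rintro (⟨h, -⟩ | ⟨-, h⟩)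
              · omega
              · exact h
            · intro h; exact Or.inr ⟨ha2, h⟩
          have hRHS : CondN (a :: l) ↔ Even (l.count a + 1) := by
            simp only [CondN, List.headI]
            have : (a :: l).count a = l.count a + 1 := by simp [List.count_cons]
            rw [this]
            constructor
            · rintro (⟨h, -⟩ | ⟨-, h⟩)
              · omega
              · exact h
            · intro h; exact Or.inr ⟨ha2, h⟩
          rw [hRHS, Nat.even_add_one]
          constructor
          · rintro ⟨-, h⟩
            intro he
            exact (h 0 (by omega)) ((hDva 0 (by omega)).2 he)
          · intro h
            refine ⟨hs0, fun v hv hc => h ((hDva v hv).1 hc)⟩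
        · have hbl : l.headI < a :=
            lt_of_le_of_ne hba (fun h => hal (h ▸ hbmem))
          have hRHSf : ¬ CondN (a :: l) := by
            simp only [CondN, List.headI]
            rintro (⟨h, -⟩ | ⟨-, h⟩)
            · omega
            · have : (a :: l).count a = 1 := by
                simp [List.count_cons, List.count_eq_zero_of_not_mem hal]
              rw [this] at h
              exact (Nat.not_odd_iff_even.2 h) (by decide)
          have hLHSf : ¬ ((a :: l).sum ≠ 0 ∧
              ∀ v, v < a → ¬ CondN (l.orderedInsert (· ≥ ·) v)) := by
            rintro ⟨-, h⟩
            by_cases hb2 : 2 ≤ l.headI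
            · rcases Nat.even_or_odd (l.count l.headI) with he | ho
              · refine h 0 (by omega) ?_
                rw [hDv 0]
                right
                have hmax : max 0 l.headI = l.headI := Nat.zero_max _
                have hcnt : (0 :: l).count l.headI = l.count l.headI := by
                  simp [List.count_cons]; omega
                rw [hmax, hcnt]
                exact ⟨hb2, he⟩
              · refine h l.headI hbl ?_
                rw [hDv l.headI]
                right
                have hmax : max l.headI l.headI = l.headI := max_self _
                have hcnt : (l.headI :: l).count l.headI = l.count l.headI + 1 := by
                  simp [List.count_cons]
                rw [hmax, hcnt]
                exact ⟨hb2, by rw [Nat.even_add_one]; exact Nat.not_even_iff_odd.2 ho⟩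
            · rcases Nat.even_or_odd (l.count 1) with he | ho
              · refine h 1 (by omega) ?_
                rw [hDv 1]
                left
                have hmax : max 1 l.headI = 1 := by omega
                have hcnt : (1 :: l).count 1 = l.count 1 + 1 := by
                  simp [List.count_cons]
                rw [hmax, hcnt]
                exact ⟨rfl, by rw [Nat.odd_add_one]; exact Nat.not_odd_iff_even.2 he⟩
              · refine h 0 (by omega) ?_
                rw [hDv 0]
                left
                have hm1 : 1 ≤ l.count 1 := by rcases ho with ⟨k, hk⟩; omega
                have h1l : (1 : ℕ) ∈ l := List.count_pos_iff.1 hm1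
                have hb1 : l.headI = 1 := by
                  have := le_headI_of_mem hsl h1l; omega
                have hmax : max 0 l.headI = 1 := by omega
                have hcnt : (0 :: l).count 1 = l.count 1 := by
                  simp [List.count_cons]
                rw [hmax, hcnt]
                exact ⟨rfl, ho⟩
          exact iff_of_false hLHSf hRHSf


theorem stmt5 (S : List ℕ) (hn : 4 ≤ S.length) (hsorted : S.Pairwise (· ≥ ·)) :
    MisereGP S ↔
      ((heap S 1 ≤ 1 ∧ Odd (alpha S)) ∨ (2 ≤ heap S 1 ∧ Even (alpha S))) := by
  have hmain := main_aux S.sum S le_rfl (by omega) hsorted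
  have hne : S ≠ [] := by intro h'; rw [h'] at hn; simp at hn
  rw [hmain, heap_one]
  by_cases h0 : S.headI = 0
  · have hA : alpha S = 0 := by rw [alpha, if_pos (by rwa [heap_one])]
    rw [hA, h0]
    unfold CondN
    rw [h0]
    constructor
    · rintro (⟨u, -⟩ | ⟨u, -⟩) <;> omega
    · rintro (⟨-, u⟩ | ⟨u, -⟩)
      · exact absurd u (by decide)
      · omega
  · have hA : alpha S = S.count S.headI := alpha_eq_count hsorted hne h0
    rw [hA]
    unfold CondN
    constructor
    · rintro (⟨u, v⟩ | ⟨u, v⟩)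
      · exact Or.inl ⟨by omega, by rw [u]; exact v⟩
      · exact Or.inr ⟨u, v⟩
    · rintro (⟨u, v⟩ | ⟨u, v⟩)
      · have hu : S.headI = 1 := by omega
        exact Or.inl ⟨hu, by rwa [hu] at v⟩
      · exact Or.inr ⟨u, v⟩
end

section
/- If a position S = (x_1, ..., x_n) satisfies x_1 ≥ 2, then S is a standard position of Greedy Nim: S is a P-position in misère Greedy Nim if and only if S is a P-position in normal play Greedy Nim. -/
section Aux

lemma oi_headI (v b : ℕ) (t : List ℕ) :
    (List.orderedInsert (· ≥ ·) v (b :: t)).headI = max v b := by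
  by_cases h : v ≥ b <;> simp [List.orderedInsert, h] <;> omega

lemma oi_count (v x : ℕ) (l : List ℕ) :
    (List.orderedInsert (· ≥ ·) v l).count x = ((v :: l) : List ℕ).count x :=
  (List.perm_orderedInsert _ v l).count_eq x

lemma oi_sum (v : ℕ) (l : List ℕ) :
    (List.orderedInsert (· ≥ ·) v l).sum = v + l.sum :=
  (List.perm_orderedInsert _ v l).sum_eq

lemma oi_length (v : ℕ) (l : List ℕ) :
    (List.orderedInsert (· ≥ ·) v l).length = l.length + 1 :=
  (List.perm_orderedInsert _ v l).length_eq

lemma mem_le_headI {S : List ℕ} (hs : S.Pairwise (· ≥ ·)) {x : ℕ} (hx : x ∈ S) :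
    x ≤ S.headI := by
  cases S with
  | nil => simp at hx
  | cons a l =>
    rcases List.mem_cons.mp hx with rfl | hx
    · exact le_rfl
    · exact (List.pairwise_cons.mp hs).1 x hx

lemma normal_of_headI_zero {S : List ℕ} (h : S.headI = 0) : NormalGP S := by
  rw [NormalGP]
  rintro S' ⟨t, ht1, ht2, rfl⟩
  omega

end Aux

lemma normal_aux : ∀ n (S : List ℕ), S.sum ≤ n → S.Pairwise (· ≥ ·) → 2 ≤ S.length →
    (NormalGP S ↔ (S.headI = 0 ∨ Even (S.count S.headI))) := by
  intro n
  induction n with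
  | zero =>
    intro S hsum hs hl
    have h0 : S.headI = 0 := by
      cases S with
      | nil => rfl
      | cons a l => simp only [List.sum_cons] at hsum; simp only [List.headI]; omega
    simp only [h0, true_or, iff_true]
    exact normal_of_headI_zero h0
  | succ n ih =>
    intro S hsum hs hl
    obtain ⟨a, b, l'', rfl⟩ : ∃ a b l'', S = a :: b :: l'' := by
      match S with
      | a :: b :: l'' => exact ⟨a, b, l'', rfl⟩
    by_cases ha : a = 0
    · subst ha
      simp only [List.headI, true_or, iff_true]
      exact normal_of_headI_zero rfl
    have ha1 : 1 ≤ a := by omega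
    have hsl : (b :: l'').Pairwise (· ≥ ·) := (List.pairwise_cons.mp hs).2
    have hla : ∀ x ∈ (b :: l''), x ≤ a := (List.pairwise_cons.mp hs).1
    have hba : b ≤ a := hla b (List.mem_cons_self)
    have key : ∀ t, 1 ≤ t → t ≤ a →
        (NormalGP (List.orderedInsert (· ≥ ·) (a - t) (b :: l'')) ↔
          (max (a - t) b = 0 ∨
            Even (((a - t) :: b :: l'').count (max (a - t) b)))) := by
      intro t ht1 ht2
      have hsum' : (List.orderedInsert (· ≥ ·) (a - t) (b :: l'')).sum ≤ n := by
        rw [oi_sum]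
        simp only [List.sum_cons] at hsum ⊢
        omega
      have := ih _ hsum' (hsl.orderedInsert _ _)
        (by rw [oi_length]; simp)
      rwa [oi_headI, oi_count] at this
    set k := (b :: l'').count a with hk
    have main1 : Odd k → NormalGP (a :: b :: l'') := by
      intro hkodd
      have hk1 : k ≠ 0 := by
        rw [Nat.odd_iff] at hkodd; omega
      have hal : a ∈ b :: l'' := by
        by_contra h
        exact hk1 (List.count_eq_zero.mpr h)
      have hba' : b = a := le_antisymm hba (mem_le_headI hsl hal)
      rw [NormalGP]
      rintro S' ⟨t, ht1, ht2, rfl⟩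
      simp only [List.headI] at ht2
      simp only [List.headI, List.tail]
      rw [key t ht1 ht2]
      have hmax : max (a - t) b = a := by
        rw [hba']; exact max_eq_right (Nat.sub_le a t)
      rw [hmax]
      rintro (h0 | hev)
      · omega
      · rw [List.count_cons_of_ne (by omega : a - t ≠ a)] at hev
        rw [Nat.even_iff] at hev; rw [Nat.odd_iff] at hkodd; omega
    have main2 : Even k → ¬ NormalGP (a :: b :: l'') := by
      intro hkev hP
      rw [NormalGP] at hP
      by_cases hk0 : k = 0
      · have hblt : b < a := by
          rcases lt_or_eq_of_le hba with h | h
          · exact h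
          · subst h; rw [List.count_cons_self] at hk; omega
        by_cases hb0 : b = 0
        · exact hP _ ⟨a, ha1, le_rfl, rfl⟩
            ((key a ha1 le_rfl).mpr (Or.inl (by omega)))
        · have hb1 : 1 ≤ b := by omega
          rcases Nat.even_or_odd ((b :: l'').count b) with hm | hm
          · refine hP _ ⟨a, ha1, le_rfl, rfl⟩
              ((key a ha1 le_rfl).mpr (Or.inr ?_))
            have hmx : max (a - a) b = b := by
              rw [Nat.sub_self]; exact max_eq_right (Nat.zero_le b)
            rw [hmx, Nat.sub_self, List.count_cons_of_ne (by omega : (0 : ℕ) ≠ b)]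
            exact hm
          · have ht1 : 1 ≤ a - b := by omega
            refine hP _ ⟨a - b, ht1, Nat.sub_le a b, rfl⟩
              ((key (a - b) ht1 (Nat.sub_le a b)).mpr (Or.inr ?_))
            have hab : a - (a - b) = b := by omega
            rw [hab, max_self, List.count_cons_self]
            exact hm.add_one
      · have hal : a ∈ b :: l'' := by
          by_contra h
          exact hk0 (List.count_eq_zero.mpr h)
        have hba' : b = a := le_antisymm hba (mem_le_headI hsl hal)
        refine hP _ ⟨a, ha1, le_rfl, rfl⟩
          ((key a ha1 le_rfl).mpr (Or.inr ?_))
        have hmx : max (a - a) b = a := by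
          rw [Nat.sub_self, hba']; exact max_eq_right (Nat.zero_le a)
        rw [hmx, List.count_cons_of_ne (by omega : a - a ≠ a)]
        exact hkev
    simp only [List.headI, List.count_cons_self]
    constructor
    · intro h
      right
      rcases Nat.even_or_odd k with hkk | hkk
      · exact absurd h (main2 hkk)
      · exact hkk.add_one
    · rintro (h | h)
      · omega
      · refine main1 ?_
        rw [Nat.even_iff] at h; rw [Nat.odd_iff]; omega

lemma misere_all_zero {S : List ℕ} (hz : ∀ x ∈ S, x = 0) :
    (MisereGP S ↔ ((2 ≤ S.headI ∧ Even (S.count S.headI)) ∨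
      (S.headI ≤ 1 ∧ Odd (S.count 1)))) := by
  have hsum : S.sum = 0 := List.sum_eq_zero hz
  have hc : S.count 1 = 0 := List.count_eq_zero.mpr (fun h => by have := hz 1 h; omega)
  constructor
  · intro h
    rw [MisereGP] at h
    exact absurd hsum h.1
  · rintro (⟨h2, _⟩ | ⟨_, hodd⟩)
    · have h0 : S.headI = 0 := by
        cases S with
        | nil => rfl
        | cons a l => exact hz a (List.mem_cons_self)
      omega
    · rw [hc] at hodd
      simp at hodd

lemma misere_aux : ∀ n (S : List ℕ), S.sum ≤ n → S.Pairwise (· ≥ ·) → 2 ≤ S.length →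
    (MisereGP S ↔ ((2 ≤ S.headI ∧ Even (S.count S.headI)) ∨
      (S.headI ≤ 1 ∧ Odd (S.count 1)))) := by
  intro n
  induction n with
  | zero =>
    intro S hsum hs hl
    refine misere_all_zero (fun x hx => ?_)
    have hx' : x ≤ S.sum := List.single_le_sum (fun i _ => Nat.zero_le i) x hx
    omega
  | succ n ih =>
    intro S hsum hs hl
    obtain ⟨a, b, l'', rfl⟩ : ∃ a b l'', S = a :: b :: l'' := by
      match S with
      | a :: b :: l'' => exact ⟨a, b, l'', rfl⟩
    have hsl : (b :: l'').Pairwise (· ≥ ·) := (List.pairwise_cons.mp hs).2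
    have hla : ∀ x ∈ (b :: l''), x ≤ a := (List.pairwise_cons.mp hs).1
    have hba : b ≤ a := hla b (List.mem_cons_self)
    by_cases ha : a = 0
    · refine misere_all_zero (fun x hx => ?_)
      rcases List.mem_cons.mp hx with rfl | hx
      · exact ha
      · have := hla x hx; omega
    have ha1 : 1 ≤ a := by omega
    have key : ∀ t, 1 ≤ t → t ≤ a →
        (MisereGP (List.orderedInsert (· ≥ ·) (a - t) (b :: l'')) ↔
          ((2 ≤ max (a - t) b ∧
              Even (((a - t) :: b :: l'').count (max (a - t) b))) ∨
            (max (a - t) b ≤ 1 ∧ Odd (((a - t) :: b :: l'').count 1)))) := by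
      intro t ht1 ht2
      have hsum' : (List.orderedInsert (· ≥ ·) (a - t) (b :: l'')).sum ≤ n := by
        rw [oi_sum]
        simp only [List.sum_cons] at hsum ⊢
        omega
      have := ih _ hsum' (hsl.orderedInsert _ _)
        (by rw [oi_length]; simp)
      rwa [oi_headI, oi_count, oi_count] at this
    by_cases ha2 : a = 1
    · -- a = 1 : heaps of size at most 1
      subst ha2
      have hb1 : b ≤ 1 := hba
      have hfkey := key 1 le_rfl le_rfl
      have hm0 : max (1 - 1) b = b := by
        rw [Nat.sub_self]; exact max_eq_right (Nat.zero_le b)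
      rw [hm0] at hfkey
      have hcnt : (((1 - 1) : ℕ) :: b :: l'').count 1 = (b :: l'').count 1 := by
        rw [Nat.sub_self, List.count_cons_of_ne (by omega : (0 : ℕ) ≠ 1)]
      rw [hcnt] at hfkey
      rw [MisereGP]
      simp only [List.headI, List.count_cons_self]
      constructor
      · rintro ⟨_, h⟩
        right
        refine ⟨le_rfl, ?_⟩
        have hnp := h _ ⟨1, le_rfl, le_rfl, rfl⟩
        simp only [List.headI, List.tail] at hnp
        rw [hfkey] at hnp
        push_neg at hnp
        have hodd := hnp.2 (by omega)
        rw [Nat.odd_iff] at hodd ⊢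
        omega
      · rintro (⟨h2, _⟩ | ⟨_, hodd⟩)
        · omega
        · refine ⟨by simp only [List.sum_cons]; omega, ?_⟩
          rintro S' ⟨t, ht1, ht2, rfl⟩
          simp only [List.headI, List.tail] at ht2 ⊢
          have ht : t = 1 := by omega
          subst ht
          rw [hfkey]
          rintro (⟨h2, _⟩ | ⟨_, hodd'⟩)
          · omega
          · rw [Nat.odd_iff] at hodd hodd'
            omega
    -- a ≥ 2
    have ha2' : 2 ≤ a := by omega
    set k := (b :: l'').count a with hk
    have main1 : Odd k → MisereGP (a :: b :: l'') := by
      intro hkodd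
      have hk1 : k ≠ 0 := by rw [Nat.odd_iff] at hkodd; omega
      have hal : a ∈ b :: l'' := by
        by_contra h
        exact hk1 (List.count_eq_zero.mpr h)
      have hba' : b = a := le_antisymm hba (mem_le_headI hsl hal)
      rw [MisereGP]
      refine ⟨by simp only [List.sum_cons]; omega, ?_⟩
      rintro S' ⟨t, ht1, ht2, rfl⟩
      simp only [List.headI, List.tail] at ht2 ⊢
      rw [key t ht1 ht2]
      have hmax : max (a - t) b = a := by
        rw [hba']; exact max_eq_right (Nat.sub_le a t)
      rw [hmax]
      rintro (⟨_, hev⟩ | ⟨hle, _⟩)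
      · rw [List.count_cons_of_ne (by omega : a - t ≠ a)] at hev
        rw [Nat.even_iff] at hev; rw [Nat.odd_iff] at hkodd; omega
      · omega
    have main2 : Even k → ¬ MisereGP (a :: b :: l'') := by
      intro hkev hP
      rw [MisereGP] at hP
      obtain ⟨_, hP⟩ := hP
      by_cases hk0 : k = 0
      · have hblt : b < a := by
          rcases lt_or_eq_of_le hba with h | h
          · exact h
          · subst h; rw [List.count_cons_self] at hk; omega
        by_cases hb2 : 2 ≤ b
        · rcases Nat.even_or_odd ((b :: l'').count b) with hm | hm
          · refine hP _ ⟨a, ha1, le_rfl, rfl⟩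
              ((key a ha1 le_rfl).mpr (Or.inl ⟨?_, ?_⟩))
            · have hmx : max (a - a) b = b := by
                rw [Nat.sub_self]; exact max_eq_right (Nat.zero_le b)
              omega
            · have hmx : max (a - a) b = b := by
                rw [Nat.sub_self]; exact max_eq_right (Nat.zero_le b)
              rw [hmx, Nat.sub_self, List.count_cons_of_ne (by omega : (0 : ℕ) ≠ b)]
              exact hm
          · have ht1 : 1 ≤ a - b := by omega
            refine hP _ ⟨a - b, ht1, Nat.sub_le a b, rfl⟩
              ((key (a - b) ht1 (Nat.sub_le a b)).mpr (Or.inl ⟨?_, ?_⟩))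
            · have hab : a - (a - b) = b := by omega
              rw [hab, max_self]; omega
            · have hab : a - (a - b) = b := by omega
              rw [hab, max_self, List.count_cons_self]
              exact hm.add_one
        · -- b ≤ 1
          have hmx : max (a - a) b = b := by
            rw [Nat.sub_self]; exact max_eq_right (Nat.zero_le b)
          rcases Nat.even_or_odd ((b :: l'').count 1) with hm | hm
          · -- even number of ones: move to 1
            have ht1 : 1 ≤ a - 1 := by omega
            refine hP _ ⟨a - 1, ht1, Nat.sub_le a 1, rfl⟩
              ((key (a - 1) ht1 (Nat.sub_le a 1)).mpr (Or.inr ⟨?_, ?_⟩))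
            · have hab : a - (a - 1) = 1 := by omega
              rw [hab]
              have : max 1 b = 1 := max_eq_left (by omega)
              omega
            · have hab : a - (a - 1) = 1 := by omega
              rw [hab, List.count_cons_self]
              exact hm.add_one
          · -- odd number of ones: move to 0
            refine hP _ ⟨a, ha1, le_rfl, rfl⟩
              ((key a ha1 le_rfl).mpr (Or.inr ⟨by omega, ?_⟩))
            rw [Nat.sub_self, List.count_cons_of_ne (by omega : (0 : ℕ) ≠ 1)]
            exact hm
      · have hal : a ∈ b :: l'' := by
          by_contra h
          exact hk0 (List.count_eq_zero.mpr h)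
        have hba' : b = a := le_antisymm hba (mem_le_headI hsl hal)
        refine hP _ ⟨a, ha1, le_rfl, rfl⟩
          ((key a ha1 le_rfl).mpr (Or.inl ⟨?_, ?_⟩))
        · have hmx : max (a - a) b = a := by
            rw [Nat.sub_self, hba']; exact max_eq_right (Nat.zero_le a)
          omega
        · have hmx : max (a - a) b = a := by
            rw [Nat.sub_self, hba']; exact max_eq_right (Nat.zero_le a)
          rw [hmx, List.count_cons_of_ne (by omega : a - a ≠ a)]
          exact hkev
    simp only [List.headI, List.count_cons_self]
    constructor
    · intro h
      left
      refine ⟨ha2', ?_⟩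
      rcases Nat.even_or_odd k with hkk | hkk
      · exact absurd h (main2 hkk)
      · exact hkk.add_one
    · rintro (⟨_, hev⟩ | ⟨hle, _⟩)
      · refine main1 ?_
        rw [Nat.even_iff] at hev; rw [Nat.odd_iff]; omega
      · omega

theorem stmt7 (S : List ℕ) (hn : 4 ≤ S.length) (hsorted : S.Pairwise (· ≥ ·)) (h1 : 2 ≤ heap S 1) :
    MisereGP S ↔ NormalGP S := by
  obtain ⟨a, l, rfl⟩ : ∃ a l, S = a :: l := by
    match S with
    | a :: l => exact ⟨a, l, rfl⟩
    | [] => simp at hn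
  have hh : heap (a :: l) 1 = a := rfl
  rw [hh] at h1
  have hl2 : 2 ≤ (a :: l).length := by
    simp only [List.length_cons] at hn ⊢; omega
  rw [misere_aux (a :: l).sum _ le_rfl hsorted hl2,
    normal_aux (a :: l).sum _ le_rfl hsorted hl2]
  simp only [List.headI]
  constructor
  · rintro (⟨_, hev⟩ | ⟨hle, _⟩)
    · exact Or.inr hev
    · omega
  · rintro (h0 | hev)
    · omega
    · exact Or.inl ⟨h1, hev⟩
end
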